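/- The function n ↦ log(∏_{i=1}^{n−1} C_i) − n²·log 2 + (3/2)·n·log n is O(n) as n → ∞; that is, log(∏_{i=1}^{n−1} C_i) = n² log 2 − (3/2) n log n + O(n). -/

import Mathlib

open Finset

/-- Kostant partition function: the number of nonnegative integer flows on the
multigraph on vertex set `{0, …, n+1}` whose edge `(i,j)` (with `i < j ≤ n+1`) has
multiplicity `mult i j`, such that the net flow at each vertex `v ≤ n+1` is `b v`. -/
noncomputable def KostantPF (n : ℕ) (mult : ℕ → ℕ → ℕ) (b : ℕ → ℤ) : ℕ :=
  Nat.card {f : ℕ → ℕ → ℕ → ℕ //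
    (∀ i j t, f i j t ≠ 0 → t < mult i j ∧ i < j ∧ j ≤ n + 1) ∧
    (∀ v ≤ n + 1,
      (∑ j ∈ Finset.range (n + 2), ∑ t ∈ Finset.range (mult v j), (f v j t : ℤ)) -
      (∑ i ∈ Finset.range (n + 2), ∑ t ∈ Finset.range (mult i v), (f i v t : ℤ)) = b v)}

/-- Edge multiplicities of the graph `k_{n+2}^{a,b,c}` on `{0,…,n+1}`. -/
def kMult (n a b c : ℕ) : ℕ → ℕ → ℕ := fun i j =>
  if i = 0 ∧ 1 ≤ j ∧ j ≤ n then a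
  else if 1 ≤ i ∧ i ≤ n ∧ j = n + 1 then b
  else if 1 ≤ i ∧ i < j ∧ j ≤ n then c
  else 0

/-- The net flow vector `(0, A 1, …, A n, -(A 1 + ⋯ + A n))` on `{0,…,n+1}`. -/
def netflow (n : ℕ) (A : ℕ → ℤ) : ℕ → ℤ := fun v =>
  if v = 0 then 0
  else if v ≤ n then A v
  else -(∑ i ∈ Finset.Icc 1 n, A i)

/-- `tvec a c i = a - 1 + c * (i - 1)`. -/
def tvec (a c : ℕ) : ℕ → ℤ := fun i => (a : ℤ) - 1 + (c : ℤ) * ((i : ℤ) - 1)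

/-- The Morris constant-term product `M_n(a,b,c)`. -/
noncomputable def MorrisM (n a b c : ℕ) : ℝ :=
  ∏ j ∈ Finset.range n,
    (Real.Gamma ((a : ℝ) - 1 + (b : ℝ) + ((n : ℝ) - 1 + (j : ℝ)) * (c : ℝ) / 2) *
      Real.Gamma ((c : ℝ) / 2 + 1)) /
    (Real.Gamma ((a : ℝ) + (j : ℝ) * (c : ℝ) / 2) *
      Real.Gamma ((b : ℝ) + (j : ℝ) * (c : ℝ) / 2) *
      Real.Gamma (((j : ℝ) + 1) * (c : ℝ) / 2 + 1))

/-- Extend `A : Fin n → ℤ` to `ℕ` so that vertex `v ∈ {1,…,n}` reads `A (v-1)`. -/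
def extFin (n : ℕ) (A : Fin n → ℤ) : ℕ → ℤ := fun v =>
  if h : v - 1 < n then A ⟨v - 1, h⟩ else 0

/-- `Ψ_n(k,a,b,c)`: the sum of `K_{k_{n+2}^{a,b,c}}(0, a_1, …, a_n, -(a_1+⋯+a_n))` over
integer vectors `(a_1,…,a_n)` with `a_i ≤ a-1+c(i-1)` for all `i` and with equality
for exactly `n - k` indices `i`. -/
noncomputable def Psi (n k a b c : ℕ) : ℕ :=
  ∑ᶠ A : Fin n → ℤ,
    if (∀ i : Fin n, A i ≤ (a : ℤ) - 1 + (c : ℤ) * ((i : ℕ) : ℤ)) ∧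
       (Finset.univ.filter (fun i : Fin n =>
          A i = (a : ℤ) - 1 + (c : ℤ) * ((i : ℕ) : ℤ))).card = n - k
    then KostantPF n (kMult n a b c) (netflow n (extFin n A)) else 0

/-- The net flow vector `ν(H) = (0, indeg_H(1)-1, …, indeg_H(n)-1, -Σ(indeg_H(v)-1))`. -/
def nuFlow (n : ℕ) (mult : ℕ → ℕ → ℕ) : ℕ → ℤ :=
  netflow n (fun v => (∑ i ∈ Finset.range (n + 2), (mult i v : ℤ)) - 1)

section MyAux
open Real Filter Topology

noncomputable def Lst (n : ℕ) : ℝ := Real.log (Stirling.stirlingSeq n)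

lemma catalan_pos' (n : ℕ) : 0 < catalan n := by
  have h := succ_mul_catalan_eq_centralBinom n
  have := Nat.centralBinom_pos n
  by_contra h0
  push_neg at h0
  interval_cases c : catalan n
  omega

lemma logfac (n : ℕ) (hn : 1 ≤ n) :
    Real.log (n.factorial : ℝ) = Lst n + Real.log (2*n) / 2 + n * Real.log n - n := by
  have h := Stirling.log_stirlingSeq_formula n
  have hn0 : (0:ℝ) < (n:ℝ) := by exact_mod_cast hn
  rw [Real.log_div hn0.ne' (Real.exp_ne_zero 1), Real.log_exp] at h
  unfold Lst
  rw [h]; ring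

lemma Lbound : ∃ C : ℝ, 0 ≤ C ∧ ∀ n, |Lst n| ≤ C := by
  have hpos : Real.sqrt π ≠ 0 := (Real.sqrt_pos.mpr Real.pi_pos).ne'
  have h1 : Tendsto (fun n => Lst n) atTop (𝓝 (Real.log (Real.sqrt π))) :=
    ((Real.continuousAt_log hpos).tendsto).comp Stirling.tendsto_stirlingSeq_sqrt_pi
  have h2 : Tendsto (fun n => |Lst n|) atTop (𝓝 |Real.log (Real.sqrt π)|) := h1.abs
  obtain ⟨C, hC⟩ := h2.bddAbove_range
  exact ⟨C, le_trans (abs_nonneg _) (hC (Set.mem_range_self 0)), fun n => hC (Set.mem_range_self n)⟩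

lemma log_catalan (i : ℕ) (hi : 1 ≤ i) :
    Real.log (catalan i : ℝ) =
      Lst (2*i) - 2 * Lst i + 2*(i:ℝ)*Real.log 2 - Real.log i / 2 - Real.log ((i:ℝ)+1) := by
  have key : (i + 1) * catalan i * (i.factorial * i.factorial) = (2*i).factorial := by
    rw [succ_mul_catalan_eq_centralBinom]
    have h := Nat.choose_mul_factorial_mul_factorial (show i ≤ 2*i by omega)
    have h2 : 2*i - i = i := by omega
    rw [h2] at h
    rw [Nat.centralBinom, ← h]; ring
  have keyR : ((i:ℝ) + 1) * (catalan i : ℝ) * ((i.factorial : ℝ) * (i.factorial : ℝ))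
      = ((2*i).factorial : ℝ) := by exact_mod_cast congrArg (Nat.cast : ℕ → ℝ) key
  have hi0 : (0:ℝ) < (i:ℝ) := by exact_mod_cast hi
  have hfac : (0:ℝ) < (i.factorial : ℝ) := by exact_mod_cast i.factorial_pos
  have hcat : (0:ℝ) < (catalan i : ℝ) := by exact_mod_cast catalan_pos' i
  have hlog : Real.log ((i:ℝ)+1) + Real.log (catalan i : ℝ) + 2 * Real.log (i.factorial : ℝ)
      = Real.log ((2*i).factorial : ℝ) := by
    rw [← keyR, Real.log_mul (by positivity) (by positivity),
        Real.log_mul (by positivity) (by positivity),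
        Real.log_mul (by positivity) (by positivity)]
    ring
  have f1 := logfac i hi
  have f2 := logfac (2*i) (by omega)
  have e1 : Real.log (2*(i:ℝ)) = Real.log 2 + Real.log i :=
    Real.log_mul two_ne_zero hi0.ne'
  have e2 : Real.log (2*((2:ℕ)*i:ℕ)) = Real.log 2 + (Real.log 2 + Real.log i) := by
    push_cast
    rw [show (2:ℝ)*(2*(i:ℝ)) = 2*(2*(i:ℝ)) by ring, Real.log_mul two_ne_zero (by positivity),
        Real.log_mul two_ne_zero hi0.ne']
  rw [f1, e1] at hlog
  rw [f2] at hlog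
  rw [e2] at hlog
  push_cast at hlog ⊢
  rw [e1] at hlog
  linarith

lemma myGaussSum (m : ℕ) : ∑ i ∈ Finset.Icc 1 m, (i:ℝ) = m*(m+1)/2 := by
  induction m with
  | zero => simp
  | succ m ih =>
    rw [Finset.sum_Icc_succ_top (by omega), ih]
    push_cast; ring

lemma mySumLog (m : ℕ) : ∑ i ∈ Finset.Icc 1 m, Real.log (i:ℝ) = Real.log (m.factorial : ℝ) := by
  induction m with
  | zero => simp
  | succ m ih =>
    rw [Finset.sum_Icc_succ_top (by omega), ih, Nat.factorial_succ]
    push_cast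
    rw [Real.log_mul (by positivity) (by exact_mod_cast m.factorial_pos.ne')]
    ring


end MyAux

open Real Filter Topology in
set_option maxHeartbeats 1000000 in
theorem stmt19 :
    (fun n : ℕ =>
        Real.log (∏ i ∈ Finset.Icc 1 (n - 1), (catalan i : ℝ)) -
          (n : ℝ) ^ 2 * Real.log 2 + 3 / 2 * (n : ℝ) * Real.log (n : ℝ)) =O[Filter.atTop]
      (fun n : ℕ => (n : ℝ)) := by
  obtain ⟨C, hC0, hC⟩ := Lbound
  rw [Asymptotics.isBigO_iff]
  refine ⟨6*C + 12, ?_⟩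
  filter_upwards [Filter.eventually_ge_atTop 2] with n hn
  set m := n - 1 with hm
  have hm1 : 1 ≤ m := by omega
  have hmn : (m:ℝ) = (n:ℝ) - 1 := by
    have : n = m + 1 := by omega
    rw [this]; push_cast; ring
  have hn2 : (2:ℝ) ≤ (n:ℝ) := by exact_mod_cast hn
  have hn0 : (0:ℝ) < (n:ℝ) := by linarith
  have hm0 : (1:ℝ) ≤ (m:ℝ) := by exact_mod_cast hm1
  -- log of product
  have hprod : Real.log (∏ i ∈ Finset.Icc 1 m, (catalan i : ℝ))
      = ∑ i ∈ Finset.Icc 1 m, Real.log (catalan i : ℝ) :=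
    Real.log_prod (fun i _ => by
      have := catalan_pos' i; positivity)
  -- split per-term
  set e : ℕ → ℝ := fun i => Lst (2*i) - 2 * Lst i + Real.log i - Real.log ((i:ℝ)+1) with he
  have hsplit : ∑ i ∈ Finset.Icc 1 m, Real.log (catalan i : ℝ)
      = (∑ i ∈ Finset.Icc 1 m, e i) + 2*Real.log 2 * (∑ i ∈ Finset.Icc 1 m, (i:ℝ))
        - (3/2) * ∑ i ∈ Finset.Icc 1 m, Real.log (i:ℝ) := by
    rw [Finset.mul_sum, Finset.mul_sum, ← Finset.sum_add_distrib, ← Finset.sum_sub_distrib]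
    refine Finset.sum_congr rfl (fun i hi => ?_)
    have hi1 : 1 ≤ i := (Finset.mem_Icc.mp hi).1
    rw [log_catalan i hi1, he]
    ring
  -- bound on e
  have hebound : ∀ i ∈ Finset.Icc 1 m, |e i| ≤ 3*C + 1 := by
    intro i hi
    have hi1 : 1 ≤ i := (Finset.mem_Icc.mp hi).1
    have hi0 : (1:ℝ) ≤ (i:ℝ) := by exact_mod_cast hi1
    have h1 : |Lst (2*i)| ≤ C := hC _
    have h2 : |Lst i| ≤ C := hC _
    have h3 : Real.log (i:ℝ) ≤ Real.log ((i:ℝ)+1) :=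
      Real.log_le_log (by linarith) (by linarith)
    have h4 : Real.log ((i:ℝ)+1) ≤ Real.log 2 + Real.log (i:ℝ) := by
      rw [← Real.log_mul two_ne_zero (by linarith)]
      exact Real.log_le_log (by linarith) (by linarith)
    have hlog2 : Real.log 2 ≤ 1 := by
      have := Real.log_le_sub_one_of_pos (show (0:ℝ) < 2 by norm_num); linarith
    have hei : e i = Lst (2*i) - 2 * Lst i + Real.log i - Real.log ((i:ℝ)+1) := rfl
    rw [hei, abs_le] at *
    constructor <;> linarith [h1.1, h1.2, h2.1, h2.2]
  have hEsum : |∑ i ∈ Finset.Icc 1 m, e i| ≤ (m:ℝ) * (3*C + 1) := by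
    calc |∑ i ∈ Finset.Icc 1 m, e i| ≤ ∑ i ∈ Finset.Icc 1 m, |e i| :=
          Finset.abs_sum_le_sum_abs _ _
      _ ≤ ∑ _i ∈ Finset.Icc 1 m, (3*C+1) := Finset.sum_le_sum hebound
      _ = (m:ℝ) * (3*C+1) := by
          rw [Finset.sum_const, Nat.card_Icc, nsmul_eq_mul]
          norm_num
  -- log factorial expansion
  have hf := logfac m hm1
  -- assemble
  have hT : Real.log (∏ i ∈ Finset.Icc 1 m, (catalan i : ℝ)) -
        (n : ℝ) ^ 2 * Real.log 2 + 3 / 2 * (n : ℝ) * Real.log (n : ℝ)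
      = (∑ i ∈ Finset.Icc 1 m, e i) - (n:ℝ)*Real.log 2
        + (3/2) * ((n:ℝ)*Real.log (n:ℝ) - (Lst m + Real.log (2*(m:ℝ))/2
            + (m:ℝ)*Real.log (m:ℝ) - (m:ℝ))) := by
    rw [hprod, hsplit, myGaussSum, mySumLog, hf, hmn]
    ring
  -- bounds on the pieces
  have hlog2 : Real.log 2 ≤ 1 := by
    have := Real.log_le_sub_one_of_pos (show (0:ℝ) < 2 by norm_num); linarith
  have hlog2' : (0:ℝ) ≤ Real.log 2 := Real.log_nonneg (by norm_num)
  have hz0 : (0:ℝ) ≤ Real.log (m:ℝ) := Real.log_nonneg hm0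
  have hzn : Real.log (m:ℝ) ≤ (n:ℝ) := by
    have := Real.log_le_sub_one_of_pos (show (0:ℝ) < (m:ℝ) by linarith)
    linarith
  have hw0 : (0:ℝ) ≤ Real.log (2*(m:ℝ)) := Real.log_nonneg (by linarith)
  have hwn : Real.log (2*(m:ℝ)) ≤ 2*(n:ℝ) := by
    have := Real.log_le_sub_one_of_pos (show (0:ℝ) < 2*(m:ℝ) by linarith)
    linarith
  have hyz : Real.log (m:ℝ) ≤ Real.log (n:ℝ) := Real.log_le_log (by linarith) (by linarith)
  have hm0' : (0:ℝ) < (m:ℝ) := by linarith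
  have hyz2 : (n:ℝ) * (Real.log (n:ℝ) - Real.log (m:ℝ)) ≤ 2 := by
    have h5 : Real.log (n:ℝ) - Real.log (m:ℝ) = Real.log ((n:ℝ)/(m:ℝ)) := by
      rw [Real.log_div hn0.ne' hm0'.ne']
    have h6 : Real.log ((n:ℝ)/(m:ℝ)) ≤ (n:ℝ)/(m:ℝ) - 1 :=
      Real.log_le_sub_one_of_pos (by positivity)
    have h7 : (n:ℝ)/(m:ℝ) - 1 = 1/(m:ℝ) := by
      rw [div_sub_one hm0'.ne', hmn]; norm_num
    have h8 : (n:ℝ) * (1/(m:ℝ)) ≤ 2 := by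
      rw [mul_one_div, div_le_iff₀ hm0', hmn]; linarith
    calc (n:ℝ) * (Real.log (n:ℝ) - Real.log (m:ℝ)) ≤ (n:ℝ) * (1/(m:ℝ)) := by
          rw [h5]
          exact mul_le_mul_of_nonneg_left (by linarith [h6, h7]) (by linarith)
      _ ≤ 2 := h8
  have hyz3 : (0:ℝ) ≤ (n:ℝ) * (Real.log (n:ℝ) - Real.log (m:ℝ)) :=
    mul_nonneg (by linarith) (by linarith)
  have hLm : |Lst m| ≤ C := hC m
  rw [abs_le] at hLm hEsum
  have hnny : (n:ℝ)*Real.log (n:ℝ) - (m:ℝ)*Real.log (m:ℝ)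
      = (n:ℝ)*(Real.log (n:ℝ) - Real.log (m:ℝ)) + Real.log (m:ℝ) := by
    rw [hmn]; ring
  have hPu : (n:ℝ)*Real.log (n:ℝ) - (m:ℝ)*Real.log (m:ℝ) ≤ 2 + (n:ℝ) := by linarith
  have hPl : (0:ℝ) ≤ (n:ℝ)*Real.log (n:ℝ) - (m:ℝ)*Real.log (m:ℝ) := by linarith
  have hmCn : (m:ℝ)*(3*C+1) ≤ (n:ℝ)*(3*C+1) :=
    mul_le_mul_of_nonneg_right (by linarith) (by linarith)
  have hxlog2 : (n:ℝ)*Real.log 2 ≤ (n:ℝ) := by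
    calc (n:ℝ)*Real.log 2 ≤ (n:ℝ)*1 := mul_le_mul_of_nonneg_left hlog2 hn0.le
      _ = (n:ℝ) := mul_one _
  have hxlog2' : (0:ℝ) ≤ (n:ℝ)*Real.log 2 := mul_nonneg hn0.le hlog2'
  have hCn : C ≤ C * (n:ℝ) := by
    calc C = C * 1 := (mul_one _).symm
      _ ≤ C * (n:ℝ) := mul_le_mul_of_nonneg_left (by linarith) hC0
  have hnorm : ‖(n:ℝ)‖ = (n:ℝ) := by
    rw [Real.norm_eq_abs, abs_of_nonneg hn0.le]
  rw [hnorm, Real.norm_eq_abs, hT, abs_le]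
  constructor <;>
    nlinarith [hEsum.1, hEsum.2, hLm.1, hLm.2, hPu, hPl, hmCn, hxlog2, hxlog2', hCn, hwn, hw0]
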